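/- Every automorphism of a complex Clifford algebra of even rank is inner: for every even natural number n and every ℂ-algebra automorphism φ of ℂCl(n), there exists an invertible element u of ℂCl(n) such that φ(x) = u * x * u⁻¹ for all x in ℂCl(n). -/

import Mathlib

/-- The quadratic form `Qℂ_n` on `ℂ^n`: `Qℂ_n(x) = ∑_{i<n} x_i²`. -/
noncomputable def Qc (n : ℕ) : QuadraticForm ℂ (Fin n → ℂ) :=
  QuadraticMap.weightedSumSquares ℂ (fun _ : Fin n => (1 : ℂ))

/-- The complex Clifford algebra `ℂCl(n)`. -/
noncomputable abbrev ComplexCliffordAlgebra (n : ℕ) := CliffordAlgebra (Qc n)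

open Module CliffordAlgebra
open scoped TensorProduct

noncomputable def Q1 : QuadraticForm ℂ ℂ := QuadraticMap.sq

lemma Q1_apply (x : ℂ) : Q1 x = x * x := rfl

/-- the isometry `ℂ^{n+1} ≃ ℂ × ℂ^n`. -/
noncomputable def splitIso (n : ℕ) : (Qc (n + 1)).IsometryEquiv (Q1.prod (Qc n)) where
  toLinearEquiv :=
    { toFun := fun x => (x 0, fun i => x i.succ)
      map_add' := fun x y => rfl
      map_smul' := fun c x => rfl
      invFun := fun p => Fin.cons p.1 p.2
      left_inv := fun x => funext fun i => Fin.cases rfl (fun j => rfl) i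
      right_inv := fun p => rfl }
  map_app' := fun x => by
    simp only [Qc, Q1, QuadraticMap.prod_apply, QuadraticMap.weightedSumSquares_apply,
      QuadraticMap.sq_apply, LinearEquiv.coe_mk, Fin.sum_univ_succ]
    simp [smul_eq_mul]

/-- `ℂCl(n+1)` as a module is `Cl(Q1) ⊗ ℂCl(n)`. -/
noncomputable def splitEquiv (n : ℕ) :
    CliffordAlgebra (Qc (n + 1)) ≃ₗ[ℂ] CliffordAlgebra Q1 ⊗[ℂ] CliffordAlgebra (Qc n) :=
  (AlgEquiv.toLinearEquiv (CliffordAlgebra.equivOfIsometry (splitIso n))) ≪≫ₗ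
    (AlgEquiv.toLinearEquiv (CliffordAlgebra.prodEquiv Q1 (Qc n))) ≪≫ₗ
      (GradedTensorProduct.of ℂ (CliffordAlgebra.evenOdd Q1) (CliffordAlgebra.evenOdd (Qc n))).symm

section Q1dim

noncomputable def eo : CliffordAlgebra Q1 := ι Q1 1

lemma span_eo : Submodule.span ℂ {(1 : CliffordAlgebra Q1), eo} = ⊤ := by
  rw [Submodule.eq_top_iff']
  intro x
  induction x using CliffordAlgebra.induction with
  | algebraMap r =>
      rw [Algebra.algebraMap_eq_smul_one]
      exact Submodule.smul_mem _ _ (Submodule.subset_span (by simp))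
  | ι v =>
      have : ι Q1 v = v • eo := by rw [eo, ← map_smul, smul_eq_mul, mul_one]
      rw [this]
      exact Submodule.smul_mem _ _ (Submodule.subset_span (by simp))
  | add a b ha hb => exact Submodule.add_mem _ ha hb
  | mul a b ha hb =>
      induction ha using Submodule.span_induction with
      | mem y hy =>
          induction hb using Submodule.span_induction with
          | mem z hz =>
              rcases hy with rfl | rfl <;> rcases hz with rfl | rfl
              · simpa using Submodule.subset_span (show (1:CliffordAlgebra Q1) ∈ _ by simp)
              · simpa using Submodule.subset_span (show eo ∈ _ by simp)
              · simpa using Submodule.subset_span (show eo ∈ _ by simp)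
              · have : eo * eo = algebraMap ℂ _ (Q1 1) := CliffordAlgebra.ι_sq_scalar Q1 1
                rw [this, Q1_apply, mul_one, Algebra.algebraMap_eq_smul_one]
                exact Submodule.smul_mem _ _ (Submodule.subset_span (by simp))
          | zero => simpa using Submodule.zero_mem _
          | add z w _ _ hz hw => rw [mul_add]; exact Submodule.add_mem _ hz hw
          | smul c z _ hz => rw [mul_smul_comm]; exact Submodule.smul_mem _ _ hz
      | zero => simpa using Submodule.zero_mem _
      | add y z _ _ hy hz => rw [add_mul]; exact Submodule.add_mem _ hy hz
      | smul c y _ hy => rw [smul_mul_assoc]; exact Submodule.smul_mem _ _ hy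

noncomputable def q1lin : ℂ →ₗ[ℂ] ℂ × ℂ where
  toFun := fun x => (x, -x)
  map_add' := fun a b => by simp [Prod.ext_iff]; ring
  map_smul' := fun c a => by simp [Prod.ext_iff]

noncomputable def q1ToProd : CliffordAlgebra Q1 →ₐ[ℂ] ℂ × ℂ :=
  CliffordAlgebra.lift Q1 ⟨q1lin, fun x => by
      simp [q1lin, Prod.ext_iff, Q1_apply, Algebra.algebraMap_eq_smul_one]⟩

lemma indep_eo : LinearIndependent ℂ ![(1 : CliffordAlgebra Q1), eo] := by
  rw [LinearIndependent.pair_iff]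
  intro a b hab
  have := congrArg q1ToProd hab
  simp only [map_add, map_smul, map_one, map_zero] at this
  have h1 : q1ToProd eo = (1, -1) := by
    rw [eo, q1ToProd, CliffordAlgebra.lift_ι_apply]
    rfl
  rw [h1] at this
  rw [Prod.ext_iff] at this
  simp only [Prod.fst_add, Prod.snd_add, Prod.smul_fst, Prod.smul_snd, smul_eq_mul, mul_one,
    Prod.fst_one, Prod.snd_one, Prod.fst_zero, Prod.snd_zero, mul_neg] at this
  obtain ⟨ha, hb⟩ := this
  constructor
  · linear_combination (ha + hb) / 2
  · linear_combination (ha - hb) / 2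

lemma range_pair : Set.range ![(1 : CliffordAlgebra Q1), eo] = {1, eo} := by
  ext x
  simp [Fin.exists_fin_two, or_comm]

noncomputable def q1Basis : Basis (Fin 2) ℂ (CliffordAlgebra Q1) :=
  Basis.mk indep_eo (by rw [range_pair, span_eo])

instance : FiniteDimensional ℂ (CliffordAlgebra Q1) :=
  Module.Finite.of_basis q1Basis

lemma finrank_Q1 : finrank ℂ (CliffordAlgebra Q1) = 2 := by
  rw [finrank_eq_card_basis q1Basis]
  simp

section base

lemma ofId_bijective : Function.Bijective (Algebra.ofId ℂ (CliffordAlgebra (Qc 0))) := by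
  constructor
  · haveI : Invertible (2 : ℂ) := invertibleOfNonzero two_ne_zero
    exact fun a b h => by
      have := congrArg (fun x => x) h
      exact (algebraMap ℂ (CliffordAlgebra (Qc 0))).injective h
  · intro x
    induction x using CliffordAlgebra.induction with
    | algebraMap r => exact ⟨r, rfl⟩
    | ι v =>
        have hv : ι (Qc 0) v = 0 := by rw [Subsingleton.elim v 0, map_zero]
        exact ⟨0, by rw [hv, map_zero]⟩
    | add a b ha hb =>
        obtain ⟨r, rfl⟩ := ha; obtain ⟨s, rfl⟩ := hb
        exact ⟨r + s, map_add _ _ _⟩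
    | mul a b ha hb =>
        obtain ⟨r, rfl⟩ := ha; obtain ⟨s, rfl⟩ := hb
        exact ⟨r * s, map_mul _ _ _⟩

noncomputable def qc0Equiv : CliffordAlgebra (Qc 0) ≃ₐ[ℂ] ℂ :=
  (AlgEquiv.ofBijective (Algebra.ofId ℂ (CliffordAlgebra (Qc 0))) ofId_bijective).symm

end base

lemma fd_and_rank (n : ℕ) :
    FiniteDimensional ℂ (CliffordAlgebra (Qc n)) ∧
      finrank ℂ (CliffordAlgebra (Qc n)) = 2 ^ n := by
  induction n with
  | zero =>
      have e := qc0Equiv.toLinearEquiv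
      constructor
      · exact Module.Finite.equiv e.symm
      · rw [e.finrank_eq, finrank_self, pow_zero]
  | succ n ih =>
      haveI := ih.1
      have e := splitEquiv n
      haveI : FiniteDimensional ℂ (CliffordAlgebra Q1 ⊗[ℂ] CliffordAlgebra (Qc n)) :=
        Module.Finite.tensorProduct ℂ _ _
      constructor
      · exact Module.Finite.equiv e.symm
      · rw [e.finrank_eq, Module.finrank_tensorProduct, finrank_Q1, ih.2, pow_succ]
        ring

section PartB

open Matrix Complex

noncomputable def wmap (n : ℕ) : (Fin (n+2) → ℂ) →ₗ[ℂ] CliffordAlgebra (Qc n) :=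
  (ι (Qc n)) ∘ₗ LinearMap.funLeft ℂ ℂ (fun k => k.succ.succ)

lemma wmap_apply (n : ℕ) (x : Fin (n+2) → ℂ) :
    wmap n x = ι (Qc n) (fun k => x k.succ.succ) := rfl

noncomputable def amap (n : ℕ) : (Fin (n+2) → ℂ) →ₗ[ℂ] CliffordAlgebra (Qc n) :=
  Algebra.linearMap ℂ _ ∘ₗ (LinearMap.proj 0 - Complex.I • LinearMap.proj 1)

noncomputable def bmap (n : ℕ) : (Fin (n+2) → ℂ) →ₗ[ℂ] CliffordAlgebra (Qc n) :=
  Algebra.linearMap ℂ _ ∘ₗ (LinearMap.proj 0 + Complex.I • LinearMap.proj 1)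

lemma amap_apply (n : ℕ) (x : Fin (n+2) → ℂ) :
    amap n x = algebraMap ℂ _ (x 0 - Complex.I * x 1) := by
  simp [amap, smul_eq_mul]

lemma bmap_apply (n : ℕ) (x : Fin (n+2) → ℂ) :
    bmap n x = algebraMap ℂ _ (x 0 + Complex.I * x 1) := by
  simp [bmap, smul_eq_mul]

noncomputable def fmat (n : ℕ) :
    (Fin (n+2) → ℂ) →ₗ[ℂ] Matrix (Fin 2) (Fin 2) (CliffordAlgebra (Qc n)) where
  toFun x := !![wmap n x, amap n x; bmap n x, - wmap n x]
  map_add' x y := by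
    ext i j
    fin_cases i <;> fin_cases j <;> simp [map_add, neg_add, add_comm]
  map_smul' c x := by
    ext i j
    fin_cases i <;> fin_cases j <;> simp [_root_.map_smul]

lemma fmat_apply (n : ℕ) (x : Fin (n+2) → ℂ) :
    fmat n x = !![wmap n x, amap n x; bmap n x, - wmap n x] := rfl

lemma Qc_apply (m : ℕ) (y : Fin m → ℂ) : Qc m y = ∑ i, y i * y i := by
  simp [Qc, QuadraticMap.weightedSumSquares_apply, smul_eq_mul]

lemma fmat_sq (n : ℕ) (x : Fin (n+2) → ℂ) :
    fmat n x * fmat n x = algebraMap ℂ _ (Qc (n+2) x) := by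
  have hw : wmap n x * wmap n x
      = algebraMap ℂ _ (∑ k : Fin n, x k.succ.succ * x k.succ.succ) := by
    rw [wmap_apply, CliffordAlgebra.ι_sq_scalar, Qc_apply]
  have hq : Qc (n+2) x
      = x 0 * x 0 + (x 1 * x 1 + ∑ k : Fin n, x k.succ.succ * x k.succ.succ) := by
    rw [Qc_apply, Fin.sum_univ_succ, Fin.sum_univ_succ]
    simp [Fin.succ_zero_eq_one]
  rw [fmat_apply, Matrix.mul_fin_two, Matrix.algebraMap_eq_diagonal]
  ext i j
  fin_cases i <;> fin_cases j <;>
    simp only [Matrix.cons_val', Matrix.cons_val_zero, Matrix.cons_val_one, Matrix.head_cons,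
      Matrix.head_fin_const, Matrix.empty_val', Matrix.cons_val_fin_one, Matrix.diagonal_apply_eq,
      Matrix.diagonal_apply_ne, Fin.zero_eq_one_iff, Nat.succ_ne_self, ne_eq, Fin.one_eq_zero_iff,
      Matrix.of_apply, Pi.algebraMap_apply, Fin.mk_zero, Fin.mk_one]
  · rw [hw, amap_apply, bmap_apply, ← _root_.map_mul, ← _root_.map_add, hq]
    congr 1
    simp only [← pow_two]
    linear_combination (-(x 1 ^ 2)) * Complex.I_sq
  · rw [amap_apply, mul_neg, Algebra.commutes, add_neg_cancel]
    exact (Matrix.diagonal_apply_ne _ (by decide)).symm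
  · rw [bmap_apply, neg_mul, Algebra.commutes, add_neg_cancel]
    exact (Matrix.diagonal_apply_ne _ (by decide)).symm
  · rw [neg_mul_neg, hw, amap_apply, bmap_apply, ← _root_.map_mul, ← _root_.map_add, hq]
    congr 1
    simp only [← pow_two]
    linear_combination (-(x 1 ^ 2)) * Complex.I_sq

noncomputable def Fhom (n : ℕ) :
    CliffordAlgebra (Qc (n+2)) →ₐ[ℂ] Matrix (Fin 2) (Fin 2) (CliffordAlgebra (Qc n)) :=
  CliffordAlgebra.lift _ ⟨fmat n, fmat_sq n⟩

lemma Fhom_ι (n : ℕ) (x : Fin (n+2) → ℂ) : Fhom n (ι _ x) = fmat n x :=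
  CliffordAlgebra.lift_ι_apply _ _ x

end PartB

section Surj

open Matrix

variable (n : ℕ)

lemma fmat_single0 : fmat n (Pi.single 0 1) = !![0, 1; 1, 0] := by
  rw [fmat_apply]
  have hw : wmap n (Pi.single (0 : Fin (n+2)) 1) = 0 := by
    rw [wmap_apply]
    have : (fun k : Fin n => (Pi.single (0 : Fin (n+2)) (1:ℂ) : Fin (n+2) → ℂ) k.succ.succ)
        = (0 : Fin n → ℂ) := by
      funext k
      have hne : (k.succ.succ : Fin (n+2)) ≠ 0 := by
        simp only [ne_eq, Fin.ext_iff, Fin.val_succ, Fin.val_zero]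
        omega
      exact Pi.single_eq_of_ne hne 1
    rw [this, map_zero]
  rw [hw, amap_apply, bmap_apply]
  norm_num

lemma fmat_single1 : fmat n (Pi.single 1 1)
    = !![0, algebraMap ℂ _ (-Complex.I); algebraMap ℂ _ Complex.I, 0] := by
  rw [fmat_apply]
  have hw : wmap n (Pi.single (1 : Fin (n+2)) 1) = 0 := by
    rw [wmap_apply]
    have : (fun k : Fin n => (Pi.single (1 : Fin (n+2)) (1:ℂ) : Fin (n+2) → ℂ) k.succ.succ)
        = (0 : Fin n → ℂ) := by
      funext k
      have hne : (k.succ.succ : Fin (n+2)) ≠ 1 := by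
        simp only [ne_eq, Fin.ext_iff, Fin.val_succ, Fin.val_one]
        omega
      exact Pi.single_eq_of_ne hne 1
    rw [this, map_zero]
  rw [hw, amap_apply, bmap_apply]
  norm_num

lemma fmat_single_succ (k : Fin n) : fmat n (Pi.single k.succ.succ 1)
    = !![ι (Qc n) (Pi.single k 1), 0; 0, - ι (Qc n) (Pi.single k 1)] := by
  rw [fmat_apply]
  have hw : wmap n (Pi.single (k.succ.succ : Fin (n+2)) 1) = ι (Qc n) (Pi.single k 1) := by
    rw [wmap_apply]
    congr 1
    funext j
    rcases eq_or_ne j k with rfl | hj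
    · simp
    · rw [Pi.single_eq_of_ne (fun h => hj (Fin.succ_injective _ (Fin.succ_injective _ h))),
        Pi.single_eq_of_ne hj]
  have hne0 : (0 : Fin (n+2)) ≠ k.succ.succ := by
    simp only [ne_eq, Fin.ext_iff, Fin.val_succ, Fin.val_zero]
    omega
  have hne1 : (1 : Fin (n+2)) ≠ k.succ.succ := by
    simp only [ne_eq, Fin.ext_iff, Fin.val_succ, Fin.val_one]
    omega
  have h0 : (Pi.single (k.succ.succ : Fin (n+2)) (1:ℂ) : Fin (n+2) → ℂ) 0 = 0 :=
    Pi.single_eq_of_ne hne0 1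
  have h1 : (Pi.single (k.succ.succ : Fin (n+2)) (1:ℂ) : Fin (n+2) → ℂ) 1 = 0 :=
    Pi.single_eq_of_ne hne1 1
  rw [hw, amap_apply, bmap_apply, h0, h1]
  norm_num

lemma mem_sx : !![(0 : CliffordAlgebra (Qc n)), 1; 1, 0] ∈ (Fhom n).range := by
  have h : Fhom n (ι _ (Pi.single 0 1)) = !![0, 1; 1, 0] := by rw [Fhom_ι, fmat_single0]
  exact ⟨_, h⟩

lemma mem_sy : !![(0 : CliffordAlgebra (Qc n)), algebraMap ℂ _ (-Complex.I);
    algebraMap ℂ _ Complex.I, 0] ∈ (Fhom n).range := by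
  have h : Fhom n (ι _ (Pi.single 1 1)) = _ := Fhom_ι n (Pi.single 1 1)
  rw [fmat_single1] at h
  exact ⟨_, h⟩

lemma mem_zk (k : Fin n) : !![ι (Qc n) (Pi.single k 1), 0; 0, - ι (Qc n) (Pi.single k 1)]
    ∈ (Fhom n).range := by
  have h : Fhom n (ι _ (Pi.single k.succ.succ 1)) = _ := Fhom_ι n (Pi.single k.succ.succ 1)
  rw [fmat_single_succ] at h
  exact ⟨_, h⟩

lemma mem_sz : !![(1 : CliffordAlgebra (Qc n)), 0; 0, -1] ∈ (Fhom n).range := by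
  have h := Subalgebra.smul_mem _ (mul_mem (mem_sx n) (mem_sy n)) (-Complex.I)
  convert h using 1
  rw [Matrix.mul_fin_two]
  ext i j
  fin_cases i <;> fin_cases j <;>
    simp [Algebra.smul_def, ← _root_.map_mul, Complex.I_mul_I, _root_.map_neg, _root_.map_one]

lemma mem_diag (a : CliffordAlgebra (Qc n)) : !![a, 0; 0, a] ∈ (Fhom n).range := by
  induction a using CliffordAlgebra.induction with
  | algebraMap r =>
      have : !![algebraMap ℂ (CliffordAlgebra (Qc n)) r, 0; 0, algebraMap ℂ _ r]
          = algebraMap ℂ (Matrix (Fin 2) (Fin 2) (CliffordAlgebra (Qc n))) r := by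
        rw [Matrix.algebraMap_eq_diagonal]
        ext i j
        fin_cases i <;> fin_cases j <;> simp
      rw [this]
      exact Subalgebra.algebraMap_mem _ r
  | ι v =>
      have hv : ι (Qc n) v = ∑ k, v k • ι (Qc n) (Pi.single k 1) := by
        conv_lhs => rw [pi_eq_sum_univ v]
        rw [map_sum]
        refine Finset.sum_congr rfl fun k _ => ?_
        rw [_root_.map_smul]
        exact congrArg _ (congrArg _ (funext fun j => by simp [Pi.single_apply, eq_comm]))
      have : !![ι (Qc n) v, 0; 0, ι (Qc n) v]
          = ∑ k, v k • (!![(1 : CliffordAlgebra (Qc n)), 0; 0, -1]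
              * !![ι (Qc n) (Pi.single k 1), 0; 0, - ι (Qc n) (Pi.single k 1)]) := by
        ext i j
        fin_cases i <;> fin_cases j <;>
          simp [Matrix.mul_fin_two, Matrix.sum_apply, hv]
      rw [this]
      exact sum_mem fun k _ => Subalgebra.smul_mem _ (mul_mem (mem_sz n) (mem_zk n k)) _
  | add a b ha hb =>
      have : !![a + b, 0; 0, a + b] = !![a, 0; 0, a] + !![b, 0; 0, b] := by
        ext i j
        fin_cases i <;> fin_cases j <;> simp
      rw [this]
      exact add_mem ha hb
  | mul a b ha hb =>
      have : !![a * b, 0; 0, a * b] = !![a, 0; 0, a] * !![b, 0; 0, b] := by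
        rw [Matrix.mul_fin_two]
        norm_num
      rw [this]
      exact mul_mem ha hb

lemma mem_E00 : !![(1 : CliffordAlgebra (Qc n)), 0; 0, 0] ∈ (Fhom n).range := by
  have h := Subalgebra.smul_mem _ (add_mem (Subalgebra.one_mem _) (mem_sz n)) ((2:ℂ)⁻¹)
  convert h using 1
  ext i j
  fin_cases i <;> fin_cases j <;>
    simp [Matrix.one_fin_two, ← two_smul ℂ (1 : CliffordAlgebra (Qc n)), smul_smul]

lemma mem_E11 : !![(0 : CliffordAlgebra (Qc n)), 0; 0, 1] ∈ (Fhom n).range := by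
  have h := Subalgebra.smul_mem _ (add_mem (Subalgebra.one_mem _)
    (Subalgebra.smul_mem _ (mem_sz n) (-1 : ℂ))) ((2:ℂ)⁻¹)
  convert h using 1
  ext i j
  fin_cases i <;> fin_cases j <;>
    simp [Matrix.one_fin_two, ← two_smul ℂ (1 : CliffordAlgebra (Qc n)), smul_smul]

lemma Fhom_surjective : Function.Surjective (Fhom n) := by
  intro m
  suffices h : m ∈ (Fhom n).range by exact h
  have hdecomp : m = !![m 0 0, 0; 0, m 0 0] * !![1, 0; 0, 0]
      + !![m 0 1, 0; 0, m 0 1] * !![(1 : CliffordAlgebra (Qc n)), 0; 0, 0] * !![0, 1; 1, 0]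
      + !![m 1 0, 0; 0, m 1 0] * !![(0 : CliffordAlgebra (Qc n)), 0; 0, 1] * !![0, 1; 1, 0]
      + !![m 1 1, 0; 0, m 1 1] * !![0, 0; 0, 1] := by
    ext i j
    fin_cases i <;> fin_cases j <;>
      simp [Matrix.mul_fin_two]
  rw [hdecomp]
  exact add_mem (add_mem (add_mem
    (mul_mem (mem_diag n _) (mem_E00 n))
    (mul_mem (mul_mem (mem_diag n _) (mem_E00 n)) (mem_sx n)))
    (mul_mem (mul_mem (mem_diag n _) (mem_E11 n)) (mem_sx n)))
    (mul_mem (mem_diag n _) (mem_E11 n))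

end Surj

section PartC

open Matrix

lemma Fhom_bijective (n : ℕ) : Function.Bijective (Fhom n) := by
  haveI h2 := (fd_and_rank (n+2)).1
  haveI hn := (fd_and_rank n).1
  refine ⟨?_, Fhom_surjective n⟩
  have hrank : finrank ℂ (CliffordAlgebra (Qc (n+2)))
      = finrank ℂ (Matrix (Fin 2) (Fin 2) (CliffordAlgebra (Qc n))) := by
    rw [Module.finrank_matrix, (fd_and_rank (n+2)).2, (fd_and_rank n).2]
    simp [pow_succ]
    ring
  have := (LinearMap.injective_iff_surjective_of_finrank_eq_finrank
    (f := (Fhom n).toLinearMap) hrank).mpr (Fhom_surjective n)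
  exact this

lemma matrix_one_equiv : Nonempty (CliffordAlgebra (Qc 0) ≃ₐ[ℂ] Matrix (Fin 1) (Fin 1) ℂ) := by
  refine ⟨qc0Equiv.symm.symm.trans
    (AlgEquiv.ofBijective (Algebra.ofId ℂ (Matrix (Fin 1) (Fin 1) ℂ)) ⟨?_, ?_⟩)⟩
  · intro a b h
    exact (algebraMap ℂ (Matrix (Fin 1) (Fin 1) ℂ)).injective h
  · intro M
    refine ⟨M 0 0, ?_⟩
    ext i j
    rw [Subsingleton.elim i 0, Subsingleton.elim j 0]
    simp [Algebra.ofId_apply, Matrix.algebraMap_eq_diagonal]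

lemma exists_matrix_equiv (m : ℕ) :
    ∃ N : ℕ, 0 < N ∧
      Nonempty (CliffordAlgebra (Qc (m + m)) ≃ₐ[ℂ] Matrix (Fin N) (Fin N) ℂ) := by
  induction m with
  | zero => exact ⟨1, one_pos, matrix_one_equiv⟩
  | succ m ih =>
      obtain ⟨N, hN, ⟨e⟩⟩ := ih
      refine ⟨2 * N, by positivity, ⟨?_⟩⟩
      rw [show m + 1 + (m + 1) = m + m + 2 by omega]
      have E1 : CliffordAlgebra (Qc (m + m + 2)) ≃ₐ[ℂ]
          Matrix (Fin 2) (Fin 2) (CliffordAlgebra (Qc (m + m))) :=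
        AlgEquiv.ofBijective (Fhom (m + m)) (Fhom_bijective (m + m))
      exact (E1.trans (e.mapMatrix)).trans
        ((Matrix.compAlgEquiv (Fin 2) (Fin N) ℂ ℂ).trans
          (Matrix.reindexAlgEquiv ℂ ℂ finProdFinEquiv))

end PartC

section PartD

variable {V : Type*} [AddCommGroup V] [Module ℂ V]

/-- there is a functional taking value 1 on any nonzero vector -/
lemma exists_dual_one (w : V) (hw : w ≠ 0) : ∃ f : V →ₗ[ℂ] ℂ, f w = 1 := by
  obtain ⟨g, hg⟩ := (LinearMap.toSpanSingleton ℂ V w).exists_leftInverse_of_injective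
    (LinearMap.ker_toSpanSingleton ℂ hw)
  refine ⟨g, ?_⟩
  have := LinearMap.congr_fun hg 1
  simpa using this

/-- A nonzero submodule invariant under all endomorphisms is everything. -/
lemma invariant_top (W : Submodule ℂ V)
    (hW : ∀ (a : V →ₗ[ℂ] V), ∀ w ∈ W, a w ∈ W) (w : V) (hw : w ∈ W) (hw0 : w ≠ 0) :
    W = ⊤ := by
  rw [Submodule.eq_top_iff']
  intro v
  obtain ⟨f, hf⟩ := exists_dual_one w hw0
  have := hW (f.smulRight v) w hw
  simpa [hf] using this

lemma end_aut_inner [Nontrivial V]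
    (φ : (V →ₗ[ℂ] V) ≃ₐ[ℂ] (V →ₗ[ℂ] V)) :
    ∃ u : (V →ₗ[ℂ] V)ˣ, ∀ x, φ x = ↑u * x * ↑u⁻¹ := by
  obtain ⟨v₀, hv₀⟩ := exists_ne (0 : V)
  obtain ⟨f, hf⟩ := exists_dual_one v₀ hv₀
  set e : V →ₗ[ℂ] V := f.smulRight v₀ with he
  have he0 : e ≠ 0 := by
    intro h
    have := LinearMap.congr_fun h v₀
    simp [he, hf, hv₀] at this
  have hφe : φ e ≠ 0 := fun h => he0 (by simpa using φ.injective (by simpa using h))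
  obtain ⟨w₀, hw₀⟩ : ∃ w₀, φ e w₀ ≠ 0 := by
    by_contra h
    push_neg at h
    exact hφe (LinearMap.ext h)
  -- the intertwiner
  let u : V →ₗ[ℂ] V :=
    { toFun := fun v => φ (f.smulRight v) w₀
      map_add' := by
        intro a b
        show φ (f.smulRight (a + b)) w₀ = _
        rw [show f.smulRight (a+b) = f.smulRight a + f.smulRight b from by ext; simp]
        simp
      map_smul' := by
        intro c a
        show φ (f.smulRight (c • a)) w₀ = _
        rw [show f.smulRight (c • a) = c • f.smulRight a from by ext x; show f x • (c • a) = c • (f x • a); rw [smul_comm]]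
        simp }
  have key : ∀ (a : V →ₗ[ℂ] V) (v : V), u (a v) = φ a (u v) := by
    intro a v
    have : f.smulRight (a v) = a * f.smulRight v := by ext; simp [Module.End.mul_apply]
    show φ (f.smulRight (a v)) w₀ = φ a (φ (f.smulRight v) w₀)
    rw [this, map_mul]
    rfl
  have hu0 : u v₀ ≠ 0 := by simpa [u, ← he] using hw₀
  have hker : LinearMap.ker u = ⊥ := by
    by_contra h
    obtain ⟨x, hxmem, hx0⟩ := Submodule.exists_mem_ne_zero_of_ne_bot h
    have := invariant_top (LinearMap.ker u)
      (fun a w hw => by simp only [LinearMap.mem_ker] at hw ⊢; rw [key, hw, map_zero]) x hxmem hx0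
    have hv : v₀ ∈ LinearMap.ker u := this ▸ Submodule.mem_top
    exact hu0 (LinearMap.mem_ker.mp hv)
  have hrange : LinearMap.range u = ⊤ := by
    refine invariant_top _ (fun a w hw => ?_) (u v₀) ⟨v₀, rfl⟩ hu0
    obtain ⟨v, rfl⟩ := hw
    have : a (u v) = u (φ.symm a v) := by rw [key (φ.symm a) v, φ.apply_symm_apply]
    exact ⟨_, this.symm⟩
  have hbij : Function.Bijective u :=
    ⟨LinearMap.ker_eq_bot.mp hker, LinearMap.range_eq_top.mp hrange⟩
  let U : (V →ₗ[ℂ] V)ˣ :=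
    { val := u
      inv := (LinearEquiv.ofBijective u hbij).symm.toLinearMap
      val_inv := by
        ext v
        exact (LinearEquiv.ofBijective u hbij).apply_symm_apply v
      inv_val := by
        ext v
        exact (LinearEquiv.ofBijective u hbij).symm_apply_apply v }
  refine ⟨U, fun a => ?_⟩
  have : φ a * u = u * a := by ext v; simp [Module.End.mul_apply, key]
  calc φ a = (φ a * ↑U) * ↑U⁻¹ := by rw [mul_assoc, U.mul_inv, mul_one]
  _ = ↑U * a * ↑U⁻¹ := by rw [this]

end PartD

section Final

lemma inner_of_equiv {A B : Type*} [Ring A] [Ring B] [Algebra ℂ A] [Algebra ℂ B]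
    (E : A ≃ₐ[ℂ] B) (h : ∀ ψ : B ≃ₐ[ℂ] B, ∃ u : Bˣ, ∀ y, ψ y = ↑u * y * ↑u⁻¹)
    (φ : A ≃ₐ[ℂ] A) : ∃ u : Aˣ, ∀ x, φ x = ↑u * x * ↑u⁻¹ := by
  obtain ⟨u, hu⟩ := h ((E.symm.trans φ).trans E)
  refine ⟨Units.map E.symm.toRingEquiv.toMulEquiv.toMonoidHom u, fun x => ?_⟩
  have h1 : φ x = E.symm (((E.symm.trans φ).trans E) (E x)) := by
    simp [AlgEquiv.trans_apply]
  rw [h1, hu (E x)]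
  rw [← map_inv (Units.map E.symm.toRingEquiv.toMulEquiv.toMonoidHom) u]
  simp only [Units.coe_map, MulEquiv.coe_toMonoidHom, RingEquiv.coe_toMulEquiv,
    AlgEquiv.coe_ringEquiv, map_mul]
  rw [E.symm_apply_apply]
  rfl

lemma matrix_aut_inner (N : ℕ) (hN : 0 < N)
    (ψ : Matrix (Fin N) (Fin N) ℂ ≃ₐ[ℂ] Matrix (Fin N) (Fin N) ℂ) :
    ∃ u : (Matrix (Fin N) (Fin N) ℂ)ˣ,
      ∀ y, ψ y = (u : Matrix (Fin N) (Fin N) ℂ) * y * ((u⁻¹ : (Matrix (Fin N) (Fin N) ℂ)ˣ) : Matrix (Fin N) (Fin N) ℂ) := by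
  haveI : Nonempty (Fin N) := Fin.pos_iff_nonempty.mp hN
  exact inner_of_equiv (LinearMap.toMatrixAlgEquiv' (R := ℂ) (n := Fin N)).symm
    (fun χ => end_aut_inner χ) ψ

theorem complex_clifford_aut_inner' (n : ℕ) (hn : Even n)
    (φ : CliffordAlgebra (Qc n) ≃ₐ[ℂ] CliffordAlgebra (Qc n)) :
    ∃ u : (CliffordAlgebra (Qc n))ˣ,
      ∀ x : CliffordAlgebra (Qc n), φ x = ↑u * x * ↑u⁻¹ := by
  obtain ⟨m, rfl⟩ := hn
  obtain ⟨N, hN, ⟨E⟩⟩ := exists_matrix_equiv m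
  exact inner_of_equiv E (matrix_aut_inner N hN) φ

end Final


/-- Every `ℂ`-algebra automorphism of a complex Clifford algebra of even rank is inner. -/
theorem complex_clifford_aut_inner (n : ℕ) (hn : Even n)
    (φ : ComplexCliffordAlgebra n ≃ₐ[ℂ] ComplexCliffordAlgebra n) :
    ∃ u : (ComplexCliffordAlgebra n)ˣ,
      ∀ x : ComplexCliffordAlgebra n, φ x = ↑u * x * ↑u⁻¹ := by
  exact complex_clifford_aut_inner' n hn φ
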